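/- For the Glauber exchange dynamics, if y = τ(x,u) is obtained from x by swapping the states of an adjacent pair u = (i,j) with x_i ≠ x_j, then the total energy satisfies E(y) − E(x) = 6 − 2E_u(x); in particular the global energy change depends only on the local energy of the exchanged edge. -/

import Mathlib

open scoped Classical

variable (n₁ n₂ : ℕ) [NeZero n₁] [NeZero n₂]

/-- The set of unordered adjacent pairs (4-neighbour torus edges), each edge
represented once by its canonical orientation (rightward or upward). -/
noncomputable def I4 : Finset ((ZMod n₁ × ZMod n₂) × (ZMod n₁ × ZMod n₂)) :=
  (Finset.univ.image fun c : ZMod n₁ × ZMod n₂ => (c, c + (1, 0))) ∪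
  (Finset.univ.image fun c : ZMod n₁ × ZMod n₂ => (c, c + (0, 1)))

variable {n₁ n₂}

/-- Total energy: number of edges whose endpoints are in equal states. -/
noncomputable def En (x : ZMod n₁ × ZMod n₂ → Bool) : ℕ :=
  ∑ u ∈ I4 n₁ n₂, if x u.1 = x u.2 then 1 else 0

/-- Local energy of the edge `{i,j}`: number of the six edges of `I₄ \ {(i,j)}`
sharing a vertex with `(i,j)` whose endpoints are in equal states. -/
noncomputable def EnLoc (i j : ZMod n₁ × ZMod n₂) (x : ZMod n₁ × ZMod n₂ → Bool) : ℕ :=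
  ∑ u ∈ (I4 n₁ n₂).filter (fun u => (u ≠ (i, j) ∧ u ≠ (j, i)) ∧
      (u.1 = i ∨ u.1 = j ∨ u.2 = i ∨ u.2 = j)),
    if x u.1 = x u.2 then 1 else 0

/-- `τ(x,(i,j))`: the configuration obtained by exchanging the states of `i` and `j`. -/
def swap (x : ZMod n₁ × ZMod n₂ → Bool) (i j : ZMod n₁ × ZMod n₂) :
    ZMod n₁ × ZMod n₂ → Bool :=
  fun c => if c = i then x j else if c = j then x i else x c

/-- 4-neighbour adjacency on the torus. -/
def adjT (p q : ZMod n₁ × ZMod n₂) : Prop :=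
  q = p + (1, 0) ∨ q = p + (0, 1) ∨ q = p + (-1, 0) ∨ q = p + (0, -1)

lemma mem_I4 (u : (ZMod n₁ × ZMod n₂) × (ZMod n₁ × ZMod n₂)) :
    u ∈ I4 n₁ n₂ ↔ u.2 = u.1 + (1, 0) ∨ u.2 = u.1 + (0, 1) := by
  obtain ⟨a, b⟩ := u
  simp only [I4, Finset.mem_union, Finset.mem_image, Finset.mem_univ, true_and, Prod.mk.injEq]
  constructor
  · rintro (⟨c, rfl, rfl⟩ | ⟨c, rfl, rfl⟩) <;> simp
  · rintro (rfl | rfl)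
    · exact Or.inl ⟨a, rfl, rfl⟩
    · exact Or.inr ⟨a, rfl, rfl⟩

lemma two_ne_zmod (n : ℕ) (h : 3 ≤ n) [NeZero n] : (2 : ZMod n) ≠ 0 := by
  intro h0
  have h2 : ((2:ℕ) : ZMod n) = 0 := by exact_mod_cast h0
  have := (ZMod.natCast_eq_zero_iff 2 n).mp h2
  have := Nat.le_of_dvd (by norm_num) this
  omega

lemma one_ne_zmod (n : ℕ) (h : 3 ≤ n) [NeZero n] : (1 : ZMod n) ≠ 0 := by
  haveI : Fact (1 < n) := ⟨by omega⟩
  exact one_ne_zero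

lemma card_S_horiz (h₁ : 3 ≤ n₁) (h₂ : 3 ≤ n₂) (i : ZMod n₁ × ZMod n₂) :
    ((I4 n₁ n₂).filter (fun u => (u ≠ (i, i + (1, 0)) ∧ u ≠ (i + (1, 0), i)) ∧
      (u.1 = i ∨ u.1 = i + (1, 0) ∨ u.2 = i ∨ u.2 = i + (1, 0)))).card = 6 := by
  have hn1 := one_ne_zmod n₁ h₁
  have hn2 := one_ne_zmod n₂ h₂
  have h2n1 := two_ne_zmod n₁ h₁
  obtain ⟨i1, i2⟩ := i
  have hset : ((I4 n₁ n₂).filter (fun u => (u ≠ ((i1,i2), (i1,i2) + (1, 0)) ∧ u ≠ ((i1,i2) + (1, 0), (i1,i2))) ∧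
      (u.1 = (i1,i2) ∨ u.1 = (i1,i2) + (1, 0) ∨ u.2 = (i1,i2) ∨ u.2 = (i1,i2) + (1, 0))))
      = ({((i1,i2),(i1,i2+1)), ((i1+1,i2),(i1+2,i2)), ((i1+1,i2),(i1+1,i2+1)),
          ((i1-1,i2),(i1,i2)), ((i1,i2-1),(i1,i2)), ((i1+1,i2-1),(i1+1,i2))} :
          Finset ((ZMod n₁ × ZMod n₂) × (ZMod n₁ × ZMod n₂))) := by
    ext ⟨⟨a1,a2⟩,⟨b1,b2⟩⟩
    simp only [Finset.mem_filter, mem_I4, Finset.mem_insert, Finset.mem_singleton, ne_eq,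
      Prod.mk.injEq, Prod.mk_add_mk, add_zero]
    constructor
    · rintro ⟨hm, ⟨hne1, hne2⟩, ht⟩
      rcases hm with ⟨rfl, rfl⟩ | ⟨rfl, rfl⟩ <;>
        rcases ht with ⟨h1, h2⟩ | ⟨h1, h2⟩ | ⟨h1, h2⟩ | ⟨h1, h2⟩
      · exact absurd ⟨⟨h1, h2⟩, ⟨by rw [h1], h2⟩⟩ hne1
      · exact Or.inr (Or.inl ⟨⟨h1, h2⟩, ⟨by linear_combination h1, h2⟩⟩)
      · exact Or.inr (Or.inr (Or.inr (Or.inl ⟨⟨by linear_combination h1, h2⟩, ⟨h1, h2⟩⟩)))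
      · exact absurd ⟨⟨by linear_combination h1, h2⟩, ⟨h1, h2⟩⟩ hne1
      · exact Or.inl ⟨⟨h1, h2⟩, ⟨h1, by linear_combination h2⟩⟩
      · exact Or.inr (Or.inr (Or.inl ⟨⟨h1, h2⟩, ⟨h1, by linear_combination h2⟩⟩))
      · exact Or.inr (Or.inr (Or.inr (Or.inr (Or.inl ⟨⟨h1, by linear_combination h2⟩, ⟨h1, h2⟩⟩))))
      · exact Or.inr (Or.inr (Or.inr (Or.inr (Or.inr ⟨⟨h1, by linear_combination h2⟩, ⟨h1, h2⟩⟩))))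
    · rintro (⟨⟨rfl,rfl⟩,⟨rfl,rfl⟩⟩ | ⟨⟨rfl,rfl⟩,⟨rfl,rfl⟩⟩ | ⟨⟨rfl,rfl⟩,⟨rfl,rfl⟩⟩ |
        ⟨⟨rfl,rfl⟩,⟨rfl,rfl⟩⟩ | ⟨⟨rfl,rfl⟩,⟨rfl,rfl⟩⟩ | ⟨⟨rfl,rfl⟩,⟨rfl,rfl⟩⟩)
      · exact ⟨Or.inr ⟨rfl, rfl⟩,
          ⟨fun h => hn1 (by linear_combination -h.2.1), fun h => hn1 (by linear_combination -h.1.1)⟩,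
          Or.inl ⟨rfl, rfl⟩⟩
      · exact ⟨Or.inl ⟨by linear_combination (1 : ZMod n₁), rfl⟩,
          ⟨fun h => hn1 (by linear_combination h.1.1), fun h => h2n1 (by linear_combination h.2.1)⟩,
          Or.inr (Or.inl ⟨rfl, rfl⟩)⟩
      · exact ⟨Or.inr ⟨rfl, rfl⟩,
          ⟨fun h => hn1 (by linear_combination h.1.1), fun h => hn2 (by linear_combination h.2.2)⟩,
          Or.inr (Or.inl ⟨rfl, rfl⟩)⟩
      · exact ⟨Or.inl ⟨by linear_combination (1 : ZMod n₁), rfl⟩,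
          ⟨fun h => hn1 (by linear_combination -h.1.1), fun h => h2n1 (by linear_combination -h.1.1)⟩,
          Or.inr (Or.inr (Or.inl ⟨rfl, rfl⟩))⟩
      · exact ⟨Or.inr ⟨rfl, by linear_combination (1 : ZMod n₂)⟩,
          ⟨fun h => hn2 (by linear_combination -h.1.2), fun h => hn1 (by linear_combination -h.1.1)⟩,
          Or.inr (Or.inr (Or.inl ⟨rfl, rfl⟩))⟩
      · exact ⟨Or.inr ⟨rfl, by linear_combination (1 : ZMod n₂)⟩,
          ⟨fun h => hn1 (by linear_combination h.1.1), fun h => hn2 (by linear_combination -h.1.2)⟩,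
          Or.inr (Or.inr (Or.inr ⟨rfl, rfl⟩))⟩
  rw [hset]
  have hAB : ((i1,i2),(i1,i2+1)) ≠ (((i1+1,i2),(i1+2,i2)) : (ZMod n₁ × ZMod n₂) × (ZMod n₁ × ZMod n₂)) :=
    fun h => hn1 (by linear_combination -congrArg (fun p => p.1.1) h)
  have hAC : ((i1,i2),(i1,i2+1)) ≠ (((i1+1,i2),(i1+1,i2+1)) : (ZMod n₁ × ZMod n₂) × (ZMod n₁ × ZMod n₂)) :=
    fun h => hn1 (by linear_combination -congrArg (fun p => p.1.1) h)
  have hAD : ((i1,i2),(i1,i2+1)) ≠ (((i1-1,i2),(i1,i2)) : (ZMod n₁ × ZMod n₂) × (ZMod n₁ × ZMod n₂)) :=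
    fun h => hn2 (by linear_combination congrArg (fun p => p.2.2) h)
  have hAE : ((i1,i2),(i1,i2+1)) ≠ (((i1,i2-1),(i1,i2)) : (ZMod n₁ × ZMod n₂) × (ZMod n₁ × ZMod n₂)) :=
    fun h => hn2 (by linear_combination congrArg (fun p => p.2.2) h)
  have hAF : ((i1,i2),(i1,i2+1)) ≠ (((i1+1,i2-1),(i1+1,i2)) : (ZMod n₁ × ZMod n₂) × (ZMod n₁ × ZMod n₂)) :=
    fun h => hn1 (by linear_combination -congrArg (fun p => p.1.1) h)
  have hBC : ((i1+1,i2),(i1+2,i2)) ≠ (((i1+1,i2),(i1+1,i2+1)) : (ZMod n₁ × ZMod n₂) × (ZMod n₁ × ZMod n₂)) :=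
    fun h => hn2 (by linear_combination -congrArg (fun p => p.2.2) h)
  have hBD : ((i1+1,i2),(i1+2,i2)) ≠ (((i1-1,i2),(i1,i2)) : (ZMod n₁ × ZMod n₂) × (ZMod n₁ × ZMod n₂)) :=
    fun h => h2n1 (by linear_combination congrArg (fun p => p.2.1) h)
  have hBE : ((i1+1,i2),(i1+2,i2)) ≠ (((i1,i2-1),(i1,i2)) : (ZMod n₁ × ZMod n₂) × (ZMod n₁ × ZMod n₂)) :=
    fun h => hn1 (by linear_combination congrArg (fun p => p.1.1) h)
  have hBF : ((i1+1,i2),(i1+2,i2)) ≠ (((i1+1,i2-1),(i1+1,i2)) : (ZMod n₁ × ZMod n₂) × (ZMod n₁ × ZMod n₂)) :=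
    fun h => hn1 (by linear_combination congrArg (fun p => p.2.1) h)
  have hCD : ((i1+1,i2),(i1+1,i2+1)) ≠ (((i1-1,i2),(i1,i2)) : (ZMod n₁ × ZMod n₂) × (ZMod n₁ × ZMod n₂)) :=
    fun h => h2n1 (by linear_combination congrArg (fun p => p.1.1) h)
  have hCE : ((i1+1,i2),(i1+1,i2+1)) ≠ (((i1,i2-1),(i1,i2)) : (ZMod n₁ × ZMod n₂) × (ZMod n₁ × ZMod n₂)) :=
    fun h => hn1 (by linear_combination congrArg (fun p => p.1.1) h)
  have hCF : ((i1+1,i2),(i1+1,i2+1)) ≠ (((i1+1,i2-1),(i1+1,i2)) : (ZMod n₁ × ZMod n₂) × (ZMod n₁ × ZMod n₂)) :=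
    fun h => hn2 (by linear_combination congrArg (fun p => p.2.2) h)
  have hDE : ((i1-1,i2),(i1,i2)) ≠ (((i1,i2-1),(i1,i2)) : (ZMod n₁ × ZMod n₂) × (ZMod n₁ × ZMod n₂)) :=
    fun h => hn1 (by linear_combination -congrArg (fun p => p.1.1) h)
  have hDF : ((i1-1,i2),(i1,i2)) ≠ (((i1+1,i2-1),(i1+1,i2)) : (ZMod n₁ × ZMod n₂) × (ZMod n₁ × ZMod n₂)) :=
    fun h => h2n1 (by linear_combination -congrArg (fun p => p.1.1) h)
  have hEF : ((i1,i2-1),(i1,i2)) ≠ (((i1+1,i2-1),(i1+1,i2)) : (ZMod n₁ × ZMod n₂) × (ZMod n₁ × ZMod n₂)) :=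
    fun h => hn1 (by linear_combination -congrArg (fun p => p.1.1) h)
  rw [Finset.card_insert_of_notMem (by
      simp only [Finset.mem_insert, Finset.mem_singleton]
      push_neg
      exact ⟨hAB, hAC, hAD, hAE, hAF⟩),
    Finset.card_insert_of_notMem (by
      simp only [Finset.mem_insert, Finset.mem_singleton]
      push_neg
      exact ⟨hBC, hBD, hBE, hBF⟩),
    Finset.card_insert_of_notMem (by
      simp only [Finset.mem_insert, Finset.mem_singleton]
      push_neg
      exact ⟨hCD, hCE, hCF⟩),
    Finset.card_insert_of_notMem (by
      simp only [Finset.mem_insert, Finset.mem_singleton]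
      push_neg
      exact ⟨hDE, hDF⟩),
    Finset.card_insert_of_notMem (by simpa using hEF),
    Finset.card_singleton]

lemma card_S_vert (h₁ : 3 ≤ n₁) (h₂ : 3 ≤ n₂) (i : ZMod n₁ × ZMod n₂) :
    ((I4 n₁ n₂).filter (fun u => (u ≠ (i, i + (0, 1)) ∧ u ≠ (i + (0, 1), i)) ∧
      (u.1 = i ∨ u.1 = i + (0, 1) ∨ u.2 = i ∨ u.2 = i + (0, 1)))).card = 6 := by
  have hn1 := one_ne_zmod n₁ h₁
  have hn2 := one_ne_zmod n₂ h₂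
  have h2n2 := two_ne_zmod n₂ h₂
  obtain ⟨i1, i2⟩ := i
  have hset : ((I4 n₁ n₂).filter (fun u => (u ≠ ((i1,i2), (i1,i2) + (0, 1)) ∧ u ≠ ((i1,i2) + (0, 1), (i1,i2))) ∧
      (u.1 = (i1,i2) ∨ u.1 = (i1,i2) + (0, 1) ∨ u.2 = (i1,i2) ∨ u.2 = (i1,i2) + (0, 1))))
      = ({((i1,i2),(i1+1,i2)), ((i1-1,i2),(i1,i2)), ((i1,i2-1),(i1,i2)),
          ((i1,i2+1),(i1+1,i2+1)), ((i1,i2+1),(i1,i2+2)), ((i1-1,i2+1),(i1,i2+1))} :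
          Finset ((ZMod n₁ × ZMod n₂) × (ZMod n₁ × ZMod n₂))) := by
    ext ⟨⟨a1,a2⟩,⟨b1,b2⟩⟩
    simp only [Finset.mem_filter, mem_I4, Finset.mem_insert, Finset.mem_singleton, ne_eq,
      Prod.mk.injEq, Prod.mk_add_mk, add_zero, zero_add]
    constructor
    · rintro ⟨hm, ⟨hne1, hne2⟩, ht⟩
      rcases hm with ⟨rfl, rfl⟩ | ⟨rfl, rfl⟩ <;>
        rcases ht with ⟨h1, h2⟩ | ⟨h1, h2⟩ | ⟨h1, h2⟩ | ⟨h1, h2⟩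
      · exact Or.inl ⟨⟨h1, h2⟩, ⟨by linear_combination h1, h2⟩⟩
      · exact Or.inr (Or.inr (Or.inr (Or.inl ⟨⟨h1, h2⟩, ⟨by linear_combination h1, h2⟩⟩)))
      · exact Or.inr (Or.inl ⟨⟨by linear_combination h1, h2⟩, ⟨h1, h2⟩⟩)
      · exact Or.inr (Or.inr (Or.inr (Or.inr (Or.inr ⟨⟨by linear_combination h1, h2⟩, ⟨h1, h2⟩⟩))))
      · exact absurd ⟨⟨h1, h2⟩, ⟨h1, by linear_combination h2⟩⟩ hne1
      · exact Or.inr (Or.inr (Or.inr (Or.inr (Or.inl ⟨⟨h1, h2⟩, ⟨h1, by linear_combination h2⟩⟩))))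
      · exact Or.inr (Or.inr (Or.inl ⟨⟨h1, by linear_combination h2⟩, ⟨h1, h2⟩⟩))
      · exact absurd ⟨⟨h1, by linear_combination h2⟩, ⟨h1, h2⟩⟩ hne1
    · rintro (⟨⟨rfl,rfl⟩,⟨rfl,rfl⟩⟩ | ⟨⟨rfl,rfl⟩,⟨rfl,rfl⟩⟩ | ⟨⟨rfl,rfl⟩,⟨rfl,rfl⟩⟩ |
        ⟨⟨rfl,rfl⟩,⟨rfl,rfl⟩⟩ | ⟨⟨rfl,rfl⟩,⟨rfl,rfl⟩⟩ | ⟨⟨rfl,rfl⟩,⟨rfl,rfl⟩⟩)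
      · exact ⟨Or.inl ⟨rfl, rfl⟩,
          ⟨fun h => hn1 (by linear_combination h.2.1),
           fun h => hn2 (by linear_combination -h.1.2)⟩,
          Or.inl ⟨rfl, rfl⟩⟩
      · exact ⟨Or.inl ⟨by ring, rfl⟩,
          ⟨fun h => hn1 (by linear_combination -h.1.1),
           fun h => hn1 (by linear_combination -h.1.1)⟩,
          Or.inr (Or.inr (Or.inl ⟨rfl, rfl⟩))⟩
      · exact ⟨Or.inr ⟨rfl, by ring⟩,
          ⟨fun h => hn2 (by linear_combination -h.1.2),
           fun h => h2n2 (by linear_combination -h.1.2)⟩,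
          Or.inr (Or.inr (Or.inl ⟨rfl, rfl⟩))⟩
      · exact ⟨Or.inl ⟨rfl, rfl⟩,
          ⟨fun h => hn2 (by linear_combination h.1.2),
           fun h => hn1 (by linear_combination h.2.1)⟩,
          Or.inr (Or.inl ⟨rfl, rfl⟩)⟩
      · exact ⟨Or.inr ⟨rfl, by ring⟩,
          ⟨fun h => hn2 (by linear_combination h.2.2),
           fun h => h2n2 (by linear_combination h.2.2)⟩,
          Or.inr (Or.inl ⟨rfl, rfl⟩)⟩
      · exact ⟨Or.inl ⟨by ring, rfl⟩,
          ⟨fun h => hn1 (by linear_combination -h.1.1),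
           fun h => hn1 (by linear_combination -h.1.1)⟩,
          Or.inr (Or.inr (Or.inr ⟨rfl, rfl⟩))⟩
  rw [hset]
  have hAB : ((i1,i2),(i1+1,i2)) ≠ (((i1-1,i2),(i1,i2)) : (ZMod n₁ × ZMod n₂) × (ZMod n₁ × ZMod n₂)) :=
    fun h => hn1 (by linear_combination congrArg (fun p => p.1.1) h)
  have hAC : ((i1,i2),(i1+1,i2)) ≠ (((i1,i2-1),(i1,i2)) : (ZMod n₁ × ZMod n₂) × (ZMod n₁ × ZMod n₂)) :=
    fun h => hn2 (by linear_combination congrArg (fun p => p.1.2) h)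
  have hAD : ((i1,i2),(i1+1,i2)) ≠ (((i1,i2+1),(i1+1,i2+1)) : (ZMod n₁ × ZMod n₂) × (ZMod n₁ × ZMod n₂)) :=
    fun h => hn2 (by linear_combination -congrArg (fun p => p.1.2) h)
  have hAE : ((i1,i2),(i1+1,i2)) ≠ (((i1,i2+1),(i1,i2+2)) : (ZMod n₁ × ZMod n₂) × (ZMod n₁ × ZMod n₂)) :=
    fun h => hn2 (by linear_combination -congrArg (fun p => p.1.2) h)
  have hAF : ((i1,i2),(i1+1,i2)) ≠ (((i1-1,i2+1),(i1,i2+1)) : (ZMod n₁ × ZMod n₂) × (ZMod n₁ × ZMod n₂)) :=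
    fun h => hn1 (by linear_combination congrArg (fun p => p.1.1) h)
  have hBC : ((i1-1,i2),(i1,i2)) ≠ (((i1,i2-1),(i1,i2)) : (ZMod n₁ × ZMod n₂) × (ZMod n₁ × ZMod n₂)) :=
    fun h => hn1 (by linear_combination -congrArg (fun p => p.1.1) h)
  have hBD : ((i1-1,i2),(i1,i2)) ≠ (((i1,i2+1),(i1+1,i2+1)) : (ZMod n₁ × ZMod n₂) × (ZMod n₁ × ZMod n₂)) :=
    fun h => hn1 (by linear_combination -congrArg (fun p => p.1.1) h)
  have hBE : ((i1-1,i2),(i1,i2)) ≠ (((i1,i2+1),(i1,i2+2)) : (ZMod n₁ × ZMod n₂) × (ZMod n₁ × ZMod n₂)) :=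
    fun h => hn1 (by linear_combination -congrArg (fun p => p.1.1) h)
  have hBF : ((i1-1,i2),(i1,i2)) ≠ (((i1-1,i2+1),(i1,i2+1)) : (ZMod n₁ × ZMod n₂) × (ZMod n₁ × ZMod n₂)) :=
    fun h => hn2 (by linear_combination -congrArg (fun p => p.1.2) h)
  have hCD : ((i1,i2-1),(i1,i2)) ≠ (((i1,i2+1),(i1+1,i2+1)) : (ZMod n₁ × ZMod n₂) × (ZMod n₁ × ZMod n₂)) :=
    fun h => h2n2 (by linear_combination -congrArg (fun p => p.1.2) h)
  have hCE : ((i1,i2-1),(i1,i2)) ≠ (((i1,i2+1),(i1,i2+2)) : (ZMod n₁ × ZMod n₂) × (ZMod n₁ × ZMod n₂)) :=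
    fun h => h2n2 (by linear_combination -congrArg (fun p => p.1.2) h)
  have hCF : ((i1,i2-1),(i1,i2)) ≠ (((i1-1,i2+1),(i1,i2+1)) : (ZMod n₁ × ZMod n₂) × (ZMod n₁ × ZMod n₂)) :=
    fun h => hn1 (by linear_combination congrArg (fun p => p.1.1) h)
  have hDE : ((i1,i2+1),(i1+1,i2+1)) ≠ (((i1,i2+1),(i1,i2+2)) : (ZMod n₁ × ZMod n₂) × (ZMod n₁ × ZMod n₂)) :=
    fun h => hn1 (by linear_combination congrArg (fun p => p.2.1) h)
  have hDF : ((i1,i2+1),(i1+1,i2+1)) ≠ (((i1-1,i2+1),(i1,i2+1)) : (ZMod n₁ × ZMod n₂) × (ZMod n₁ × ZMod n₂)) :=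
    fun h => hn1 (by linear_combination congrArg (fun p => p.1.1) h)
  have hEF : ((i1,i2+1),(i1,i2+2)) ≠ (((i1-1,i2+1),(i1,i2+1)) : (ZMod n₁ × ZMod n₂) × (ZMod n₁ × ZMod n₂)) :=
    fun h => hn1 (by linear_combination congrArg (fun p => p.1.1) h)
  rw [Finset.card_insert_of_notMem (by
      simp only [Finset.mem_insert, Finset.mem_singleton]
      push_neg
      exact ⟨hAB, hAC, hAD, hAE, hAF⟩),
    Finset.card_insert_of_notMem (by
      simp only [Finset.mem_insert, Finset.mem_singleton]
      push_neg
      exact ⟨hBC, hBD, hBE, hBF⟩),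
    Finset.card_insert_of_notMem (by
      simp only [Finset.mem_insert, Finset.mem_singleton]
      push_neg
      exact ⟨hCD, hCE, hCF⟩),
    Finset.card_insert_of_notMem (by
      simp only [Finset.mem_insert, Finset.mem_singleton]
      push_neg
      exact ⟨hDE, hDF⟩),
    Finset.card_insert_of_notMem (by simpa using hEF),
    Finset.card_singleton]

set_option maxHeartbeats 1000000 in
lemma main_aux (h₁ : 3 ≤ n₁) (h₂ : 3 ≤ n₂) (x : ZMod n₁ × ZMod n₂ → Bool)
    (i j : ZMod n₁ × ZMod n₂) (hne : x i ≠ x j)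
    (hcard : ((I4 n₁ n₂).filter (fun u => (u ≠ (i, j) ∧ u ≠ (j, i)) ∧
      (u.1 = i ∨ u.1 = j ∨ u.2 = i ∨ u.2 = j))).card = 6) :
    (En (swap x i j) : ℤ) - En x = 6 - 2 * EnLoc i j x := by
  classical
  have hij : i ≠ j := fun h => hne (congrArg x h)
  set y := swap x i j with hy
  have hyi : y i = x j := by simp [hy, swap]
  have hyj : y j = x i := by simp [hy, swap, hij.symm]
  have hyo : ∀ c, c ≠ i → c ≠ j → y c = x c := by
    intro c hci hcj; simp [hy, swap, hci, hcj]
  set P : (ZMod n₁ × ZMod n₂) × (ZMod n₁ × ZMod n₂) → Prop :=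
    fun u => u.1 = i ∨ u.1 = j ∨ u.2 = i ∨ u.2 = j with hP
  set Q : (ZMod n₁ × ZMod n₂) × (ZMod n₁ × ZMod n₂) → Prop :=
    fun u => u ≠ (i, j) ∧ u ≠ (j, i) with hQ
  have hcast : ∀ z : ZMod n₁ × ZMod n₂ → Bool,
      ((En z : ℕ) : ℤ) = ∑ u ∈ I4 n₁ n₂, (if z u.1 = z u.2 then (1:ℤ) else 0) := by
    intro z; rw [En, Nat.cast_sum]; simp
  have hcastLoc : ((EnLoc i j x : ℕ) : ℤ) =
      ∑ u ∈ (I4 n₁ n₂).filter (fun u => Q u ∧ P u), (if x u.1 = x u.2 then (1:ℤ) else 0) := by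
    rw [EnLoc, Nat.cast_sum]; simp [hQ, hP]
  -- far edges
  have hfar : ∀ u ∈ (I4 n₁ n₂).filter (fun u => ¬ P u),
      (if y u.1 = y u.2 then (1:ℤ) else 0) = (if x u.1 = x u.2 then (1:ℤ) else 0) := by
    intro u hu
    rw [Finset.mem_filter] at hu
    have hp := hu.2
    simp only [hP] at hp
    push_neg at hp
    rw [hyo u.1 hp.1 hp.2.1, hyo u.2 hp.2.2.1 hp.2.2.2]
  -- the swapped edge itself
  have hedge : ∀ u ∈ ((I4 n₁ n₂).filter P).filter (fun u => ¬ Q u),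
      (if y u.1 = y u.2 then (1:ℤ) else 0) = 0 ∧ (if x u.1 = x u.2 then (1:ℤ) else 0) = 0 := by
    intro u hu
    rw [Finset.mem_filter] at hu
    have hq := hu.2
    simp only [hQ] at hq
    push_neg at hq
    rcases Classical.em (u = (i, j)) with rfl | hu1
    · constructor
      · simp only [hyi, hyj]; exact if_neg fun h => hne h.symm
      · exact if_neg hne
    · have : u = (j, i) := hq hu1
      subst this
      constructor
      · simp only [hyi, hyj]; exact if_neg hne
      · exact if_neg fun h => hne h.symm
  -- the six neighbouring edges flip
  have hflip : ∀ u ∈ (I4 n₁ n₂).filter (fun u => Q u ∧ P u),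
      (if y u.1 = y u.2 then (1:ℤ) else 0) = 1 - (if x u.1 = x u.2 then (1:ℤ) else 0) := by
    intro u hu
    rw [Finset.mem_filter] at hu
    obtain ⟨huI, hq, hp⟩ := hu
    simp only [hQ] at hq
    obtain ⟨hq1, hq2⟩ := hq
    simp only [hP] at hp
    have hd : u.1 ≠ u.2 := by
      rcases (mem_I4 u).1 huI with h | h <;> rw [h] <;> intro hh
      · exact one_ne_zmod n₁ h₁ (congrArg Prod.fst (left_eq_add.mp hh))
      · exact one_ne_zmod n₂ h₂ (congrArg Prod.snd (left_eq_add.mp hh))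
    by_cases e1 : u.1 = i <;> by_cases e2 : u.1 = j <;>
      by_cases e3 : u.2 = i <;> by_cases e4 : u.2 = j
    all_goals try exact absurd (e1.symm.trans e2) hij
    all_goals try exact absurd (e3.symm.trans e4) hij
    all_goals try exact absurd (e1.trans e3.symm) hd
    all_goals try exact absurd (e2.trans e4.symm) hd
    all_goals try exact absurd (Prod.ext e1 e4) hq1
    all_goals try exact absurd (Prod.ext e2 e3) hq2
    all_goals try (rcases hp with h | h | h | h <;> contradiction)
    all_goals
      first
      | rw [e1, hyi, hyo u.2 e3 e4]
      | rw [e2, hyj, hyo u.2 e3 e4]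
      | rw [e3, hyi, hyo u.1 e1 e2]
      | rw [e4, hyj, hyo u.1 e1 e2]
    all_goals
      (cases hb1 : x u.1 <;> cases hb2 : x u.2 <;> cases hi : x i <;> cases hj : x j <;>
        simp_all)
  -- assemble
  have hSS : ((I4 n₁ n₂).filter P).filter Q = (I4 n₁ n₂).filter (fun u => Q u ∧ P u) := by
    rw [Finset.filter_filter]
    exact Finset.filter_congr (fun u _ => by tauto)
  have key : ∀ g : (ZMod n₁ × ZMod n₂) × (ZMod n₁ × ZMod n₂) → ℤ,
      ∑ u ∈ I4 n₁ n₂, g u =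
      ∑ u ∈ (I4 n₁ n₂).filter (fun u => Q u ∧ P u), g u
      + ∑ u ∈ ((I4 n₁ n₂).filter P).filter (fun u => ¬ Q u), g u
      + ∑ u ∈ (I4 n₁ n₂).filter (fun u => ¬ P u), g u := by
    intro g
    rw [← Finset.sum_filter_add_sum_filter_not (I4 n₁ n₂) P g,
      ← Finset.sum_filter_add_sum_filter_not ((I4 n₁ n₂).filter P) Q g, hSS]
  rw [hcast, hcast, hcastLoc, key, key]
  rw [Finset.sum_congr rfl hfar,
    Finset.sum_eq_zero (fun u hu => (hedge u hu).1),
    Finset.sum_eq_zero (fun u hu => (hedge u hu).2),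
    Finset.sum_congr rfl hflip,
    Finset.sum_sub_distrib, Finset.sum_const, hcard]
  push_cast
  ring

/-- swapping the states of an adjacent pair `u = (i,j)` with
`x_i ≠ x_j` changes the total energy by `E(y) − E(x) = 6 − 2E_u(x)`. -/
theorem energy_change_of_swap
    (n₁ n₂ : ℕ) [NeZero n₁] [NeZero n₂] (h₁ : 3 ≤ n₁) (h₂ : 3 ≤ n₂)
    (x : ZMod n₁ × ZMod n₂ → Bool) (i j : ZMod n₁ × ZMod n₂)
    (hadj : adjT i j) (hne : x i ≠ x j)
    (y : ZMod n₁ × ZMod n₂ → Bool) (hy : y = swap x i j) :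
    (En y : ℤ) - En x = 6 - 2 * EnLoc i j x := by
  subst hy
  have hsym : ((I4 n₁ n₂).filter (fun u => (u ≠ (i, j) ∧ u ≠ (j, i)) ∧
        (u.1 = i ∨ u.1 = j ∨ u.2 = i ∨ u.2 = j)))
      = ((I4 n₁ n₂).filter (fun u => (u ≠ (j, i) ∧ u ≠ (i, j)) ∧
        (u.1 = j ∨ u.1 = i ∨ u.2 = j ∨ u.2 = i))) :=
    Finset.filter_congr (fun u _ => by tauto)
  rcases hadj with hj | hj | hj | hj
  · subst hj
    exact main_aux h₁ h₂ x i _ hne (card_S_horiz h₁ h₂ i)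
  · subst hj
    exact main_aux h₁ h₂ x i _ hne (card_S_vert h₁ h₂ i)
  · have hi : j + (1, 0) = i := by
      rw [hj]
      obtain ⟨i1, i2⟩ := i
      simp only [Prod.mk_add_mk, Prod.mk.injEq]
      constructor <;> ring
    refine main_aux h₁ h₂ x i j hne ?_
    rw [hsym, ← hi]
    exact card_S_horiz h₁ h₂ j
  · have hi : j + (0, 1) = i := by
      rw [hj]
      obtain ⟨i1, i2⟩ := i
      simp only [Prod.mk_add_mk, Prod.mk.injEq]
      constructor <;> ring
    refine main_aux h₁ h₂ x i j hne ?_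
    rw [hsym, ← hi]
    exact card_S_vert h₁ h₂ j
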